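/- Let $\psi : \mathcal{I}^* \to (0,\infty)$ be submultiplicative ($\psi(\mathbf{ij}) \leq \psi(\mathbf{i})\psi(\mathbf{j})$) on words over a finite alphabet $\mathcal{I}$. Let $A \subseteq \mathcal{I}^*$ be a finite set of words such that every sufficiently long word has a prefix in $A$ (precisely: there is $K$ such that every word of length $\geq K$ has a prefix lying in $A$), and suppose $\sum_{\mathbf{i} \in A} \psi(\mathbf{i}) \leq 1$. Then $\lim_{k \to \infty} (\Psi_k)^{1/k} \leq 1$, where $\Psi_k = \sum_{\mathbf{i} \in \mathcal{I}^k} \psi(\mathbf{i})$. -/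

import Mathlib

open Finset

private lemma stopping_aux {ι : Type*} [Fintype ι]
    (ψ : List ι → ℝ) (hpos : ∀ w, 0 < ψ w)
    (hsub : ∀ x y : List ι, ψ (x ++ y) ≤ ψ x * ψ y)
    (A : Finset (List ι)) (hne : ∀ p ∈ A, p ≠ ([] : List ι))
    (K : ℕ) (hK1 : 1 ≤ K) (hK : ∀ w : List ι, K ≤ w.length → ∃ p ∈ A, p <+: w)
    (hsum : ∑ p ∈ A, ψ p ≤ 1)
    (Ψ : ℕ → ℝ) (hΨ : ∀ k, Ψ k = ∑ w : Fin k → ι, ψ (List.ofFn w)) :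
    ∀ k, Ψ k ≤ ∑ j ∈ Finset.range (K + 1), Ψ j := by
  classical
  set B := ∑ j ∈ Finset.range (K + 1), Ψ j with hB
  have hΨnonneg : ∀ k, 0 ≤ Ψ k := by
    intro k; rw [hΨ]; exact Finset.sum_nonneg fun _ _ => (hpos _).le
  -- sum over lists of length k
  let Lk : ℕ → Finset (List ι) := fun k => Finset.univ.image (fun w : Fin k → ι => List.ofFn w)
  have hmem : ∀ k (l : List ι), l ∈ Lk k ↔ l.length = k := by
    intro k l
    simp only [Lk, Finset.mem_image, Finset.mem_univ, true_and]
    constructor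
    · rintro ⟨w, rfl⟩; simp
    · rintro rfl
      exact ⟨l.get, List.ofFn_get l⟩
  have hΨ' : ∀ k, Ψ k = ∑ l ∈ Lk k, ψ l := by
    intro k
    rw [hΨ, Finset.sum_image (fun x _ y _ h => List.ofFn_injective h)]
  -- key inequality
  have key : ∀ k, K ≤ k → Ψ k ≤ ∑ p ∈ A, ψ p * Ψ (k - p.length) := by
    intro k hk
    rw [hΨ']
    have step1 : ∑ l ∈ Lk k, ψ l ≤
        ∑ l ∈ Lk k, ∑ p ∈ A, (if p <+: l then ψ l else 0) := by
      apply Finset.sum_le_sum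
      intro l hl
      obtain ⟨p, hpA, hpl⟩ := hK l (by rw [(hmem k l).mp hl]; exact hk)
      have := Finset.single_le_sum (f := fun p => if p <+: l then ψ l else 0)
        (fun q _ => by split <;> [exact (hpos l).le; exact le_rfl]) hpA
      simpa [hpl] using this
    refine step1.trans ?_
    rw [Finset.sum_comm]
    apply Finset.sum_le_sum
    intro p hpA
    rw [← Finset.sum_filter]
    have hdrop : ∀ l ∈ (Lk k).filter (fun l => p <+: l), ψ l ≤ ψ p * ψ (l.drop p.length) := by
      intro l hl
      rw [Finset.mem_filter] at hl
      obtain ⟨t, rfl⟩ := hl.2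
      calc ψ (p ++ t) ≤ ψ p * ψ t := hsub _ _
        _ = ψ p * ψ ((p ++ t).drop p.length) := by rw [List.drop_left]
    calc ∑ l ∈ (Lk k).filter (fun l => p <+: l), ψ l
        ≤ ∑ l ∈ (Lk k).filter (fun l => p <+: l), ψ p * ψ (l.drop p.length) :=
          Finset.sum_le_sum hdrop
      _ = ψ p * ∑ l ∈ (Lk k).filter (fun l => p <+: l), ψ (l.drop p.length) := by
          rw [Finset.mul_sum]
      _ ≤ ψ p * Ψ (k - p.length) := by
          apply mul_le_mul_of_nonneg_left _ (hpos p).le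
          rw [hΨ']
          rw [show (∑ l ∈ (Lk k).filter (fun l => p <+: l), ψ (l.drop p.length)) =
              ∑ u ∈ ((Lk k).filter (fun l => p <+: l)).image (fun l => l.drop p.length), ψ u by
            rw [Finset.sum_image]
            intro x hx y hy hxy
            rw [Finset.mem_coe, Finset.mem_filter] at hx hy
            obtain ⟨tx, rfl⟩ := hx.2
            obtain ⟨ty, rfl⟩ := hy.2
            dsimp only at hxy
            rw [List.drop_left, List.drop_left] at hxy
            rw [hxy]]
          apply Finset.sum_le_sum_of_subset_of_nonneg
          · intro u hu
            rw [Finset.mem_image] at hu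
            obtain ⟨l, hl, rfl⟩ := hu
            rw [Finset.mem_filter] at hl
            rw [hmem]
            rw [List.length_drop, (hmem k l).mp hl.1]
          · intro u _ _; exact (hpos u).le
  -- strong induction
  intro k
  induction k using Nat.strong_induction_on with
  | _ k ih =>
    by_cases hk : k ≤ K
    · exact Finset.single_le_sum (f := Ψ) (fun j _ => hΨnonneg j)
        (Finset.mem_range.mpr (Nat.lt_succ_of_le hk))
    · push_neg at hk
      have hBnn : 0 ≤ B := Finset.sum_nonneg fun j _ => hΨnonneg j
      calc Ψ k ≤ ∑ p ∈ A, ψ p * Ψ (k - p.length) := key k hk.le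
        _ ≤ ∑ p ∈ A, ψ p * B := by
            apply Finset.sum_le_sum
            intro p hpA
            apply mul_le_mul_of_nonneg_left _ (hpos p).le
            apply ih
            have : 1 ≤ p.length := by
              cases p with
              | nil => exact absurd rfl (hne [] hpA)
              | cons a t => simp
            omega
        _ = (∑ p ∈ A, ψ p) * B := by rw [Finset.sum_mul]
        _ ≤ 1 * B := mul_le_mul_of_nonneg_right hsum hBnn
        _ = B := one_mul B

/-- If a finite cross-section `A` of the tree of words (every long enough word
has a prefix in `A`) has section sum at most 1, then the pressure is at most 1. -/
theorem pressure_le_one_of_stopping {ι : Type*} [Fintype ι] [Nonempty ι]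
    (ψ : List ι → ℝ) (hpos : ∀ w, 0 < ψ w)
    (hsub : ∀ x y : List ι, ψ (x ++ y) ≤ ψ x * ψ y)
    (A : Finset (List ι)) (hne : ∀ p ∈ A, p ≠ ([] : List ι))
    (K : ℕ) (hK : ∀ w : List ι, K ≤ w.length → ∃ p ∈ A, p <+: w)
    (hsum : ∑ p ∈ A, ψ p ≤ 1)
    (Ψ : ℕ → ℝ) (hΨ : ∀ k, Ψ k = ∑ w : Fin k → ι, ψ (List.ofFn w))
    (L : ℝ)
    (hlim : Filter.Tendsto (fun k : ℕ => (Ψ k) ^ (1 / (k : ℝ)))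
      Filter.atTop (nhds L)) :
    L ≤ 1 := by
  classical
  set K' := max K 1 with hK'
  have hK'1 : 1 ≤ K' := le_max_right _ _
  have hK'K : ∀ w : List ι, K' ≤ w.length → ∃ p ∈ A, p <+: w :=
    fun w hw => hK w (le_trans (le_max_left _ _) hw)
  have hbound := stopping_aux ψ hpos hsub A hne K' hK'1 hK'K hsum Ψ hΨ
  set B := ∑ j ∈ Finset.range (K' + 1), Ψ j with hB
  have hΨpos : ∀ k, 0 < Ψ k := by
    intro k
    rw [hΨ]
    exact Finset.sum_pos (fun _ _ => hpos _) Finset.univ_nonempty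
  have hBpos : 0 < B := lt_of_lt_of_le (hΨpos 0) (hbound 0)
  have h1 : Filter.Tendsto (fun k : ℕ => B ^ (1 / (k : ℝ))) Filter.atTop (nhds 1) := by
    have h0 : Filter.Tendsto (fun k : ℕ => 1 / (k : ℝ)) Filter.atTop (nhds 0) :=
      tendsto_one_div_atTop_nhds_zero_nat
    have := (Real.continuousAt_const_rpow (a := B) (b := 0) hBpos.ne').tendsto.comp h0
    simpa [Real.rpow_zero, Function.comp_def] using this
  refine le_of_tendsto_of_tendsto' hlim h1 ?_
  intro k
  exact Real.rpow_le_rpow (hΨpos k).le (hbound k) (by positivity)
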